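/- Let (w_n) be a non-negative real sequence satisfying w_{n+1} ≤ (1 - a_n) w_n + b_n for all n ≥ 1, where (a_n) and (b_n) are non-negative sequences with ∑_{n=1}^∞ a_n = ∞ and ∑_{n=1}^∞ b_n < ∞. Then lim_{n→∞} w_n = 0. -/

import Mathlib

open Filter

theorem stmt_0 (w a b : ℕ → ℝ)
    (hw : ∀ n, 0 ≤ w n) (ha : ∀ n, 0 ≤ a n) (hb : ∀ n, 0 ≤ b n)
    (hrec : ∀ n, 1 ≤ n → w (n + 1) ≤ (1 - a n) * w n + b n)
    (hdiv : Tendsto (fun N => ∑ n ∈ Finset.Icc 1 N, a n) atTop atTop)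
    (hsum : Summable b) :
    Tendsto w atTop (nhds 0) := by
  rw [Metric.tendsto_atTop]
  intro ε hε
  set ε' := ε / 2 with hε'def
  have hε' : 0 < ε' := by positivity
  -- tail sums of b are small
  obtain ⟨s, hs⟩ := (summable_iff_vanishing.mp hsum) (Metric.ball 0 ε')
    (Metric.ball_mem_nhds 0 hε')
  set N₀ := max (s.sup id + 1) 1 with hN₀def
  have hN₀1 : 1 ≤ N₀ := le_max_right _ _
  have htail : ∀ t : Finset ℕ, (∀ i ∈ t, N₀ ≤ i) → ∑ k ∈ t, b k < ε' := by
    intro t ht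
    have hdisj : Disjoint t s := by
      rw [Finset.disjoint_left]
      intro i hi hiS
      have h1 : N₀ ≤ i := ht i hi
      have h2 : i ≤ s.sup id := Finset.le_sup (f := id) hiS
      have : s.sup id + 1 ≤ N₀ := le_max_left _ _
      omega
    have := hs t hdisj
    rw [Metric.mem_ball, Real.dist_eq, sub_zero] at this
    calc ∑ k ∈ t, b k ≤ |∑ k ∈ t, b k| := le_abs_self _
      _ < ε' := this
  -- Step 1: w is almost decreasing: w m ≤ w n + tail b sum
  have key1 : ∀ n, N₀ ≤ n → ∀ m, n ≤ m → w m ≤ w n + ∑ k ∈ Finset.Ico n m, b k := by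
    intro n hn m hm
    induction m, hm using Nat.le_induction with
    | base => simp
    | succ m hm ih =>
      have h1m : 1 ≤ m := le_trans hN₀1 (le_trans hn hm)
      have := hrec m h1m
      have hmono : (1 - a m) * w m ≤ w m := by nlinarith [ha m, hw m]
      rw [Finset.sum_Ico_succ_top hm]
      linarith
  -- Step 2: there exists n ≥ N₀ with w n < ε'
  have key2 : ∃ n, N₀ ≤ n ∧ w n < ε' := by
    by_contra hcon
    push_neg at hcon
    have H : ∀ k, N₀ ≤ k → ε' ≤ w k := fun k hk => hcon k hk
    -- a k ≤ 1 for k ≥ N₀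
    have Ha : ∀ k, N₀ ≤ k → a k ≤ 1 := by
      intro k hk
      by_contra hak
      push_neg at hak
      have h1k : 1 ≤ k := le_trans hN₀1 hk
      have := hrec k h1k
      have hb' : b k < ε' := by
        have := htail {k} (by simp [hk])
        simpa using this
      have h1 : (1 - a k) * w k ≤ 0 :=
        mul_nonpos_of_nonpos_of_nonneg (by linarith) (hw k)
      have h2 : ε' ≤ w (k + 1) := H (k + 1) (le_trans hk (Nat.le_succ k))
      linarith
    -- telescoping
    have tel : ∀ m, N₀ ≤ m →
        w m ≤ w N₀ - ε' * ∑ k ∈ Finset.Ico N₀ m, a k + ∑ k ∈ Finset.Ico N₀ m, b k := by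
      intro m hm
      induction m, hm using Nat.le_induction with
      | base => simp
      | succ m hm ih =>
        have h1m : 1 ≤ m := le_trans hN₀1 hm
        have hr := hrec m h1m
        have ham := Ha m hm
        have hwm := H m hm
        have hstep : (1 - a m) * w m ≤ w m - a m * ε' := by nlinarith [ha m]
        rw [Finset.sum_Ico_succ_top hm, Finset.sum_Ico_succ_top hm]
        have : w (m + 1) ≤ w m - ε' * a m + b m := by nlinarith
        linarith
    -- choose m large
    set C := (w N₀ + ε') / ε' with hC
    obtain ⟨m, hm1, hm2⟩ :=
      (((hdiv.eventually_ge_atTop (C + ∑ k ∈ Finset.Ico 1 N₀, a k)).and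
        (eventually_ge_atTop N₀)).exists)
    have hsplit : ∑ k ∈ Finset.Ico 1 N₀, a k + ∑ k ∈ Finset.Ico N₀ (m + 1), a k
        = ∑ k ∈ Finset.Ico 1 (m + 1), a k :=
      Finset.sum_Ico_consecutive a hN₀1 (le_trans hm2 (Nat.le_succ m))
    have hIcc : ∑ k ∈ Finset.Icc 1 m, a k = ∑ k ∈ Finset.Ico 1 (m + 1), a k := by
      rw [← Finset.Ico_add_one_right_eq_Icc]
    have hS : C ≤ ∑ k ∈ Finset.Ico N₀ (m + 1), a k := by
      rw [hIcc] at hm1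
      linarith
    have hm' : N₀ ≤ m + 1 := le_trans hm2 (Nat.le_succ m)
    have h1 := tel (m + 1) hm'
    have h2 := H (m + 1) hm'
    have h3 : ∑ k ∈ Finset.Ico N₀ (m + 1), b k < ε' :=
      htail _ (fun i hi => (Finset.mem_Ico.mp hi).1)
    have h4 : ε' * C ≤ ε' * ∑ k ∈ Finset.Ico N₀ (m + 1), a k :=
      mul_le_mul_of_nonneg_left hS (le_of_lt hε')
    have h5 : ε' * C = w N₀ + ε' := by
      rw [hC]; field_simp
    linarith
  -- Step 3: conclude
  obtain ⟨n, hn, hwn⟩ := key2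
  refine ⟨n, fun m hm => ?_⟩
  rw [Real.dist_eq, sub_zero, abs_of_nonneg (hw m)]
  have h1 := key1 n hn m hm
  have h2 : ∑ k ∈ Finset.Ico n m, b k < ε' :=
    htail _ (fun i hi => le_trans hn (Finset.mem_Ico.mp hi).1)
  calc w m ≤ w n + ∑ k ∈ Finset.Ico n m, b k := h1
    _ < ε' + ε' := by linarith
    _ = ε := by rw [hε'def]; ring
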